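/- arXiv:2506.07143 — 2 statements merged into one kernel-verified Lean document; each statement's English description precedes it below -/
import Mathlib

section
/- Let G be a group containing no subgroup isomorphic to ℤ × ℤ. Then for any commuting elements g, h ∈ G, the Pontryagin product g ∧ h vanishes in H₂(G; ℚ). -/
open Finsupp

/-- Degree-2 differential of the (inhomogeneous) bar complex of `G` with
coefficients in `k`: `[a|b] ↦ [b] - [ab] + [a]`. -/
noncomputable def barD2 (k : Type) [Ring k] (G : Type) [Group G] :
    ((G × G) →₀ k) →ₗ[k] (G →₀ k) :=
  Finsupp.lift _ k _ fun p => single p.2 1 - single (p.1 * p.2) 1 + single p.1 1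

/-- Degree-3 differential of the bar complex:
`[a|b|c] ↦ [b|c] - [ab|c] + [a|bc] - [a|b]`. -/
noncomputable def barD3 (k : Type) [Ring k] (G : Type) [Group G] :
    ((G × G × G) →₀ k) →ₗ[k] ((G × G) →₀ k) :=
  Finsupp.lift _ k _ fun t =>
    single (t.2.1, t.2.2) 1 - single (t.1 * t.2.1, t.2.2) 1
      + single (t.1, t.2.1 * t.2.2) 1 - single (t.1, t.2.1) 1

/-- The second group homology `H₂(G; k)`: 2-cycles modulo 2-boundaries of the
bar complex of `G` with coefficients in `k`. -/
noncomputable abbrev groupH2 (k : Type) [Ring k] (G : Type) [Group G] : Type :=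
  (barD2 k G).toAddMonoidHom.ker ⧸
    (((barD3 k G).toAddMonoidHom.range).comap (barD2 k G).toAddMonoidHom.ker.subtype)

theorem wedge_cycle {k : Type} [Ring k] {G : Type} [Group G] (g h : G)
    (hc : g * h = h * g) :
    single (g, h) (1 : k) - single (h, g) 1 ∈ (barD2 k G).toAddMonoidHom.ker := by
  rw [AddMonoidHom.mem_ker, LinearMap.toAddMonoidHom_coe, map_sub]
  simp only [barD2, Finsupp.lift_apply, sum_single_index, one_smul, zero_smul, hc]
  abel

/-- The Pontryagin product `g ∧ h ∈ H₂(G; k)` of commuting elements `g, h` of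
`G`, i.e. the homology class of the bar 2-cycle `[g|h] - [h|g]`. -/
noncomputable def wedgeClass (k : Type) [Ring k] {G : Type} [Group G]
    (g h : G) (hc : g * h = h * g) : groupH2 k G :=
  QuotientAddGroup.mk ⟨single (g, h) 1 - single (h, g) 1, wedge_cycle g h hc⟩

section maps

variable (k : Type) [Ring k] {G H : Type} [Group G] [Group H] (f : G →* H)

noncomputable def barC1Map : (G →₀ k) →ₗ[k] (H →₀ k) := Finsupp.lmapDomain k k f

noncomputable def barC2Map : ((G × G) →₀ k) →ₗ[k] ((H × H) →₀ k) :=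
  Finsupp.lmapDomain k k (Prod.map f f)

noncomputable def barC3Map : ((G × G × G) →₀ k) →ₗ[k] ((H × H × H) →₀ k) :=
  Finsupp.lmapDomain k k (Prod.map f (Prod.map f f))

theorem mapDomain_sub' {k : Type} [Ring k] {α β : Type} (f : α → β)
    (x y : α →₀ k) : mapDomain f (x - y) = mapDomain f x - mapDomain f y :=
  (Finsupp.mapDomain.addMonoidHom f).map_sub x y

theorem barD2_comm :
    (barD2 k H).comp (barC2Map k f) = (barC1Map k f).comp (barD2 k G) := by
  apply Finsupp.lhom_ext
  intro a b
  simp only [LinearMap.comp_apply, barC2Map, barC1Map, lmapDomain_apply,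
    mapDomain_single, barD2, Finsupp.lift_apply, sum_single_index, one_smul,
    zero_smul, smul_sub, smul_add]
  simp [mapDomain_add, mapDomain_sub', mapDomain_single, Prod.map, map_mul]

theorem barD3_comm :
    (barD3 k H).comp (barC3Map k f) = (barC2Map k f).comp (barD3 k G) := by
  apply Finsupp.lhom_ext
  intro a b
  simp only [LinearMap.comp_apply, barC3Map, barC2Map, lmapDomain_apply,
    mapDomain_single, barD3, Finsupp.lift_apply, sum_single_index, one_smul,
    zero_smul, smul_sub, smul_add]
  simp [mapDomain_add, mapDomain_sub', mapDomain_single, Prod.map, map_mul]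

theorem barC2Map_ker (x : (G × G) →₀ k) (hx : x ∈ (barD2 k G).toAddMonoidHom.ker) :
    barC2Map k f x ∈ (barD2 k H).toAddMonoidHom.ker := by
  rw [AddMonoidHom.mem_ker, LinearMap.toAddMonoidHom_coe] at hx ⊢
  have := congrFun (congrArg DFunLike.coe (barD2_comm k f)) x
  simp only [LinearMap.comp_apply] at this
  rw [this, hx, map_zero]

/-- The homomorphism `H₂(G; k) → H₂(H; k)` induced by a group homomorphism
`f : G → H`. -/
noncomputable def groupH2Map : groupH2 k G →+ groupH2 k H := by
  refine QuotientAddGroup.map _ _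
    ((((barC2Map k f).toAddMonoidHom.domRestrict
        (barD2 k G).toAddMonoidHom.ker).codRestrict
      (barD2 k H).toAddMonoidHom.ker
      (fun x => barC2Map_ker k f x.1 x.2)) : _ →+ _) ?_
  rintro ⟨x, hx⟩ hmem
  simp only [AddSubgroup.mem_comap, AddSubgroup.coe_subtype,
    AddMonoidHom.mem_range] at hmem ⊢
  obtain ⟨y, hy⟩ := hmem
  refine ⟨barC3Map k f y, ?_⟩
  have h3 := congrFun (congrArg DFunLike.coe (barD3_comm k f)) y
  simp only [LinearMap.comp_apply] at h3
  simp only [LinearMap.toAddMonoidHom_coe, AddSubgroup.coe_subtype] at hy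
  simp only [AddMonoidHom.codRestrict_apply, AddMonoidHom.domRestrict_apply,
    LinearMap.toAddMonoidHom_coe, AddSubgroup.coe_subtype]
  rw [h3, hy]
  rfl

end maps

section aux

variable {G : Type} [Group G]

/-- The bar 2-chain `[x|y] - [y|x]`. -/
noncomputable def cyc (x y : G) : (G × G) →₀ ℚ :=
  single (x, y) 1 - single (y, x) 1

theorem barD3_single (a b c : G) :
    barD3 ℚ G (single (a, b, c) 1) =
      single (b, c) 1 - single (a * b, c) 1 + single (a, b * c) 1 - single (a, b) 1 := by
  simp [barD3, Finsupp.lift_apply, sum_single_index]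

theorem rel_mul (a b c : G) (hac : a * c = c * a) (hbc : b * c = c * b) :
    cyc (a * b) c - cyc a c - cyc b c ∈ LinearMap.range (barD3 ℚ G) := by
  refine ⟨-(single (a, b, c) 1 - single (a, c, b) 1 + single (c, a, b) 1), ?_⟩
  simp only [map_neg, map_add, map_sub, barD3_single, cyc]
  rw [hac, hbc]
  abel

theorem rel_one (x : G) : cyc 1 x ∈ LinearMap.range (barD3 ℚ G) := by
  refine ⟨single ((1 : G), (1 : G), x) 1 + single (x, (1 : G), (1 : G)) 1, ?_⟩
  simp only [map_add, barD3_single, cyc, one_mul, mul_one]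
  abel

theorem rel_pow (g x : G) (hgx : g * x = x * g) (n : ℕ) :
    cyc (g ^ n) x - (n : ℚ) • cyc g x ∈ LinearMap.range (barD3 ℚ G) := by
  induction n with
  | zero => simpa using rel_one x
  | succ n ih =>
    have hcom : Commute g x := hgx
    have h1 := rel_mul (g ^ n) g x (hcom.pow_left n).eq hgx
    have := add_mem h1 ih
    convert this using 1
    rw [pow_succ]
    push_cast
    module

theorem rel_zpow (g x : G) (hgx : g * x = x * g) (n : ℤ) :
    cyc (g ^ n) x - (n : ℚ) • cyc g x ∈ LinearMap.range (barD3 ℚ G) := by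
  have hcom : Commute g x := hgx
  cases n with
  | ofNat m => simpa [zpow_natCast] using rel_pow g x hgx m
  | negSucc m =>
    have h1 := rel_mul (g ^ (m + 1)) ((g ^ (m + 1))⁻¹) x
      ((hcom.pow_left (m + 1)).eq) ((hcom.pow_left (m + 1)).inv_left.eq)
    rw [mul_inv_cancel] at h1
    have h2 := rel_pow g x hgx (m + 1)
    have h3 := rel_one x
    have := sub_mem (sub_mem h3 h1) h2
    convert this using 1
    rw [zpow_negSucc]
    push_cast
    module

end aux

/-- If `G` has no subgroup isomorphic to `ℤ × ℤ`, the Pontryagin product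
`g ∧ h` of any commuting `g, h` vanishes in `H₂(G; ℚ)`. -/
theorem stmt10 (G : Type) [Group G] (hG : ∀ K : Subgroup G, ¬ Nonempty (K ≃* Multiplicative (ℤ × ℤ)))
    (g h : G) (hc : g * h = h * g) : wedgeClass ℚ g h hc = 0 := by
  classical
  have hcom : Commute g h := hc
  -- Step 1: find a nontrivial relation `g ^ a * h ^ b = 1`.
  have key : ∃ p : ℤ × ℤ, p ≠ 0 ∧ g ^ p.1 * h ^ p.2 = 1 := by
    set φ : Multiplicative (ℤ × ℤ) →* G :=
      { toFun := fun p => g ^ (Multiplicative.toAdd p).1 * h ^ (Multiplicative.toAdd p).2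
        map_one' := by simp
        map_mul' := by
          intro x y
          simp only [toAdd_mul, Prod.fst_add, Prod.snd_add, zpow_add]
          exact (hcom.zpow_zpow _ _).mul_mul_mul_comm _ _ } with hφ
    by_cases hinj : Function.Injective φ
    · exact absurd ⟨(MonoidHom.ofInjective hinj).symm⟩ (hG φ.range)
    · rw [Function.not_injective_iff] at hinj
      obtain ⟨x, y, hxy, hne⟩ := hinj
      refine ⟨Multiplicative.toAdd (x * y⁻¹), ?_, ?_⟩
      · simp only [toAdd_mul, toAdd_inv]
        intro hzero
        apply hne
        have : Multiplicative.toAdd x = Multiplicative.toAdd y := by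
          have := congrArg (· + Multiplicative.toAdd y) hzero
          simpa [add_assoc] using this
        exact Multiplicative.toAdd.injective this
      · have : φ (x * y⁻¹) = 1 := by
          rw [map_mul, map_inv, hxy, mul_inv_cancel]
        simpa [hφ] using this
  obtain ⟨⟨a, b⟩, hp, hrel⟩ := key
  -- Step 2: deduce `a • cyc g h ∈ R` and `b • cyc g h ∈ R`.
  have hRa : (a : ℚ) • cyc g h ∈ LinearMap.range (barD3 ℚ G) := by
    have h1 := rel_mul (g ^ a) (h ^ b) h (hcom.zpow_left a).eq
      ((Commute.refl h).zpow_left b).eq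
    rw [hrel] at h1
    have h2 := rel_zpow g h hc a
    have h3 := rel_zpow h h rfl b
    have h4 := rel_one h
    have hhh : cyc h h = 0 := sub_self _
    have := sub_mem (sub_mem h4 h1) (add_mem h2 h3)
    convert this using 1
    rw [hhh]
    module
  have hRb : (b : ℚ) • cyc g h ∈ LinearMap.range (barD3 ℚ G) := by
    have h1 := rel_mul (g ^ a) (h ^ b) g ((Commute.refl g).zpow_left a).eq
      ((hcom.symm.zpow_left b).eq)
    rw [hrel] at h1
    have h2 := rel_zpow g g rfl a
    have h3 := rel_zpow h g hc.symm b
    have h4 := rel_one g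
    have hgg : cyc g g = 0 := sub_self _
    have hswap : cyc h g = -cyc g h := by simp [cyc]
    have := sub_mem (sub_mem h4 h1) (add_mem h2 h3)
    convert neg_mem this using 1
    rw [hgg, hswap]
    module
  -- Step 3: conclude `cyc g h ∈ R`.
  have hR : cyc g h ∈ LinearMap.range (barD3 ℚ G) := by
    rcases (by simpa [Prod.ext_iff] using hp : ¬(a = 0 ∧ b = 0)) with h'
    by_cases ha : a = 0
    · have hb : b ≠ 0 := fun hb => h' ⟨ha, hb⟩
      have : ((b : ℚ)⁻¹ * (b : ℚ)) • cyc g h ∈ LinearMap.range (barD3 ℚ G) := by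
        rw [mul_smul]; exact Submodule.smul_mem _ _ hRb
      rwa [inv_mul_cancel₀ (by exact_mod_cast hb), one_smul] at this
    · have : ((a : ℚ)⁻¹ * (a : ℚ)) • cyc g h ∈ LinearMap.range (barD3 ℚ G) := by
        rw [mul_smul]; exact Submodule.smul_mem _ _ hRa
      rwa [inv_mul_cancel₀ (by exact_mod_cast ha), one_smul] at this
  -- Step 4: translate to the quotient.
  rw [wedgeClass, QuotientAddGroup.eq_zero_iff]
  simp only [AddSubgroup.mem_comap, AddSubgroup.coe_subtype, AddMonoidHom.mem_range,
    LinearMap.toAddMonoidHom_coe]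
  obtain ⟨y, hy⟩ := hR
  exact ⟨y, by simpa [cyc] using hy⟩
end

section
/- Let G be a torsion-free group containing no subgroup isomorphic to ℤ × ℤ. Then for any commuting elements g, h ∈ G, the Pontryagin product g ∧ h vanishes in H₂(G; ℤ). -/
open Finsupp

section aux

variable {k : Type} [Ring k] {G : Type} [Group G]

theorem barD3_single_s11 (t : G × G × G) :
    barD3 k G (single t (1:k)) =
      single (t.2.1, t.2.2) 1 - single (t.1 * t.2.1, t.2.2) 1
        + single (t.1, t.2.1 * t.2.2) 1 - single (t.1, t.2.1) 1 := by
  simp [barD3, Finsupp.lift_apply, sum_single_index]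

theorem wedge_congr {g g' h h' : G} (hg : g = g') (hh : h = h')
    (hc : g * h = h * g) (hc' : g' * h' = h' * g') :
    wedgeClass k g h hc = wedgeClass k g' h' hc' := by
  subst hg; subst hh; rfl

theorem wedge_antisymm (g h : G) (hc : g * h = h * g) :
    wedgeClass k g h hc = - wedgeClass k h g hc.symm := by
  unfold wedgeClass
  rw [← QuotientAddGroup.mk_neg]
  congr 1
  ext : 1
  simp [neg_sub]

theorem wedge_self (c : G) (hc : c * c = c * c) :
    wedgeClass k c c hc = 0 := by
  unfold wedgeClass
  have : (⟨single (c, c) (1:k) - single (c, c) 1, wedge_cycle c c hc⟩ :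
      (barD2 k G).toAddMonoidHom.ker) = 0 := Subtype.ext (sub_self _)
  rw [this, QuotientAddGroup.mk_zero]

theorem wedge_mul_right (g x y : G) (hgx : g * x = x * g) (hgy : g * y = y * g)
    (hgxy : g * (x * y) = (x * y) * g) :
    wedgeClass k g (x * y) hgxy = wedgeClass k g x hgx + wedgeClass k g y hgy := by
  unfold wedgeClass
  rw [← QuotientAddGroup.mk_add, QuotientAddGroup.eq]
  rw [AddSubgroup.mem_comap, AddMonoidHom.mem_range]
  refine ⟨single (x, g, y) 1 - single (g, x, y) 1 - single (x, y, g) 1, ?_⟩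
  simp only [LinearMap.toAddMonoidHom_coe, map_sub, barD3_single_s11,
    AddSubgroup.coe_subtype, AddSubgroup.coe_add, AddSubgroup.coe_neg,
    NegMemClass.coe_neg, AddMemClass.coe_add]
  rw [hgx, ← hgy]
  abel

theorem wedge_one (g : G) (hc : g * 1 = 1 * g) :
    wedgeClass k g 1 hc = 0 := by
  unfold wedgeClass
  rw [show (0 : groupH2 k G) = QuotientAddGroup.mk 0 from
    (QuotientAddGroup.mk_zero _).symm, QuotientAddGroup.eq]
  rw [AddSubgroup.mem_comap, AddMonoidHom.mem_range]
  refine ⟨single (g, 1, 1) 1 + single (1, 1, g) 1, ?_⟩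
  simp only [LinearMap.toAddMonoidHom_coe, map_add, barD3_single_s11,
    AddSubgroup.coe_subtype, AddSubgroup.coe_add, AddSubgroup.coe_neg,
    NegMemClass.coe_neg, AddMemClass.coe_add, ZeroMemClass.coe_zero,
    mul_one, one_mul]
  abel

theorem wedge_one_left (h : G) (hc : 1 * h = h * 1) :
    wedgeClass k 1 h hc = 0 := by
  rw [wedge_antisymm, wedge_one, neg_zero]

theorem wedge_inv (g x : G) (hgx : g * x = x * g) (hgi : g * x⁻¹ = x⁻¹ * g) :
    wedgeClass k g x⁻¹ hgi = - wedgeClass k g x hgx := by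
  have h1 : g * (x * x⁻¹) = (x * x⁻¹) * g := by
    rw [mul_inv_cancel, mul_one, one_mul]
  have := wedge_mul_right (k := k) g x x⁻¹ hgx hgi h1
  have h2 : wedgeClass k g (x * x⁻¹) h1 = 0 := by
    rw [wedge_congr (g' := g) (h' := (1 : G)) rfl (mul_inv_cancel x) h1
      (by rw [mul_one, one_mul]), wedge_one]
  rw [h2] at this
  exact eq_neg_of_add_eq_zero_right this.symm

theorem wedge_zpow (g c : G) (hgc : g * c = c * g) (n : ℤ)
    (hn : g * c ^ n = c ^ n * g) :
    wedgeClass k g (c ^ n) hn = n • wedgeClass k g c hgc := by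
  induction n using Int.induction_on with
  | zero =>
      rw [wedge_congr (g' := g) (h' := (1:G)) rfl (zpow_zero c) hn
        (by rw [mul_one, one_mul]), wedge_one, zero_zsmul]
  | succ i ih =>
      have hi : g * c ^ (i : ℤ) = c ^ (i : ℤ) * g :=
        ((Commute.zpow_right (a := g) hgc i))
      have hmul : g * (c ^ (i:ℤ) * c) = (c ^ (i:ℤ) * c) * g := by
        rw [← zpow_add_one]; exact Commute.zpow_right hgc _
      rw [wedge_congr (g' := g) (h' := c ^ (i:ℤ) * c) rfl (zpow_add_one c i) hn hmul,
        wedge_mul_right g (c ^ (i:ℤ)) c hi hgc hmul, ih hi, add_zsmul, one_zsmul]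
  | pred i ih =>
      have hi : g * c ^ (-i : ℤ) = c ^ (-i : ℤ) * g :=
        ((Commute.zpow_right (a := g) hgc (-i)))
      have hci : g * c⁻¹ = c⁻¹ * g := Commute.inv_right hgc
      have hmul : g * (c ^ (-i:ℤ) * c⁻¹) = (c ^ (-i:ℤ) * c⁻¹) * g := by
        rw [← zpow_sub_one]; exact Commute.zpow_right hgc _
      rw [wedge_congr (g' := g) (h' := c ^ (-i:ℤ) * c⁻¹) rfl (zpow_sub_one c (-i)) hn hmul,
        wedge_mul_right g (c ^ (-i:ℤ)) c⁻¹ hi hci hmul, ih hi,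
        wedge_inv g c hgc hci, sub_zsmul, one_zsmul]

theorem wedge_zpow_zpow (c : G) (i j : ℤ)
    (hc : c ^ i * c ^ j = c ^ j * c ^ i) :
    wedgeClass k (c ^ i) (c ^ j) hc = 0 := by
  have h1 : c ^ i * c = c * c ^ i := (Commute.zpow_left rfl i)
  rw [wedge_zpow (c ^ i) c h1 j hc, wedge_antisymm,
    wedge_zpow c c rfl i h1.symm, wedge_self, zsmul_zero, neg_zero, zsmul_zero]

end aux

/-- If `G` is torsion-free with no subgroup isomorphic to `ℤ × ℤ`, the
Pontryagin product `g ∧ h` of any commuting `g, h` vanishes in `H₂(G; ℤ)`. -/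
theorem stmt11 (G : Type) [Group G] (htf : ∀ g : G, g ≠ 1 → ¬ IsOfFinOrder g)
    (hG : ∀ K : Subgroup G, ¬ Nonempty (K ≃* Multiplicative (ℤ × ℤ)))
    (g h : G) (hc : g * h = h * g) : wedgeClass ℤ g h hc = 0 := by
  have hcomm : Commute g h := hc
  have tfz : ∀ (x : G) (i : ℤ), i ≠ 0 → x ^ i = 1 → x = 1 := by
    intro x i hi hx
    by_contra hx1
    exact htf x hx1 (isOfFinOrder_iff_zpow_eq_one.mpr ⟨i, hi, hx⟩)
  let ψ : Multiplicative (ℤ × ℤ) →* G :=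
    MonoidHom.mk'
      (fun p => g ^ (Multiplicative.toAdd p).1 * h ^ (Multiplicative.toAdd p).2)
      (by
        intro x y
        simp only [toAdd_mul, Prod.fst_add, Prod.snd_add, zpow_add]
        exact (hcomm.zpow_zpow _ _).mul_mul_mul_comm _ _)
  have hnotinj : ¬ Function.Injective ψ := fun hinj =>
    hG ψ.range ⟨(MonoidHom.ofInjective hinj).symm⟩
  rw [injective_iff_map_eq_one] at hnotinj
  push_neg at hnotinj
  obtain ⟨a, ha1, hane⟩ := hnotinj
  set m : ℤ := (Multiplicative.toAdd a).1 with hmdef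
  set n : ℤ := (Multiplicative.toAdd a).2 with hndef
  have hgh : g ^ m * h ^ n = 1 := ha1
  have hmn : ¬ (m = 0 ∧ n = 0) := by
    rintro ⟨hm0, hn0⟩
    apply hane
    have : Multiplicative.toAdd a = (0 : ℤ × ℤ) := by
      have : Multiplicative.toAdd a = (m, n) := rfl
      rw [this, hm0, hn0]; rfl
    simpa using congrArg Multiplicative.ofAdd this
  by_cases hn0 : n = 0
  · have hm0 : m ≠ 0 := fun hm0 => hmn ⟨hm0, hn0⟩
    have hg1 : g = 1 := tfz g m hm0 (by rwa [hn0, zpow_zero, mul_one] at hgh)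
    rw [wedge_congr hg1 rfl hc (by rw [one_mul, mul_one])]
    exact wedge_one_left h _
  by_cases hm0 : m = 0
  · have hh1 : h = 1 := tfz h n hn0 (by rwa [hm0, zpow_zero, one_mul] at hgh)
    rw [wedge_congr rfl hh1 hc (by rw [one_mul, mul_one])]
    exact wedge_one g _
  -- main case
  have hgm : g ^ m = h ^ (-n) := by
    rw [zpow_neg]; exact eq_inv_of_mul_eq_one_left hgh
  set d : ℕ := Int.gcd m n with hd
  have hdpos : 0 < d := Int.gcd_pos_of_ne_zero_left n hm0
  have hdz : (d : ℤ) ≠ 0 := Int.natCast_ne_zero.mpr hdpos.ne'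
  set m' : ℤ := m / d with hm'
  set n' : ℤ := n / d with hn'
  have hmm : m' * d = m := Int.ediv_mul_cancel (Int.gcd_dvd_left m n)
  have hnn : n' * d = n := Int.ediv_mul_cancel (Int.gcd_dvd_right m n)
  have key : g ^ m' = h ^ (-n') := by
    have h1 : (g ^ m') ^ (d : ℤ) = (h ^ (-n')) ^ (d : ℤ) := by
      rw [← zpow_mul, ← zpow_mul, hmm, neg_mul, hnn, hgm]
    have hcom : Commute (g ^ m') ((h ^ (-n'))⁻¹) :=
      (hcomm.zpow_zpow m' (-n')).inv_right
    have h2 : (g ^ m' * (h ^ (-n'))⁻¹) ^ (d : ℤ) = 1 := by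
      rw [hcom.mul_zpow, inv_zpow, h1, mul_inv_cancel]
    exact mul_inv_eq_one.mp (tfz _ _ hdz h2)
  have hcop : Int.gcd m' n' = 1 := Int.gcd_div_gcd_div_gcd hdpos
  set s : ℤ := Int.gcdA m' n' with hs
  set t : ℤ := - Int.gcdB m' n' with ht
  have hbez : m' * s + (-n') * t = 1 := by
    have hb := Int.gcd_eq_gcd_ab m' n'
    rw [hcop] at hb
    push_cast at hb
    rw [hs, ht]; ring_nf; ring_nf at hb; linarith
  set c : G := g ^ t * h ^ s with hcdef
  have hcB : c ^ (-n') = g := by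
    rw [hcdef, (hcomm.zpow_zpow t s).mul_zpow, ← zpow_mul, ← zpow_mul]
    have h3 : h ^ (s * -n') = g ^ (m' * s) := by
      rw [mul_comm s (-n'), zpow_mul, ← key, ← zpow_mul]
    rw [h3, ← zpow_add]
    have h4 : t * -n' + m' * s = 1 := by linear_combination hbez
    rw [h4, zpow_one]
  have hcA : c ^ m' = h := by
    rw [hcdef, (hcomm.zpow_zpow t s).mul_zpow, ← zpow_mul, ← zpow_mul]
    have h3 : g ^ (t * m') = h ^ (-n' * t) := by
      rw [mul_comm t m', zpow_mul, key, ← zpow_mul, mul_comm]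
    rw [h3, ← zpow_add]
    have h4 : -n' * t + s * m' = 1 := by linear_combination hbez
    rw [h4, zpow_one]
  have hc' : c ^ (-n') * c ^ m' = c ^ m' * c ^ (-n') :=
    Commute.zpow_zpow_self c (-n') m'
  rw [wedge_congr hcB.symm hcA.symm hc hc']
  exact wedge_zpow_zpow c (-n') m' hc'
end
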